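/- Given natural numbers n and l ≥ 1, the quantities p = ⌊n/l + (l-1)/2⌋ and q = ⌈n/l - (l-1)/2⌉ satisfy p - q ∈ {l-2, l-1} when l ≥ 2; more precisely, q = p - l + 1 if k = 0 and q = p - l + 2 if k > 0, where k = n - l(2p+1-l)/2. (The heights of the leftmost and rightmost columns of the staircase fixed point differ by l-1 or l-2 according to whether there are exceeding grains.) -/

import Mathlib

/-- Height of the leftmost column: `p = ⌊n/l + (l-1)/2⌋`. -/
def pfloor (n l : ℕ) : ℤ := ⌊(n : ℚ) / l + (l : ℚ) / 2 - 1 / 2⌋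

/-- Height of the rightmost column: `q = ⌈n/l - (l-1)/2⌉`. -/
def qceil (n l : ℕ) : ℤ := ⌈(n : ℚ) / l - (l : ℚ) / 2 + 1 / 2⌉

/-- Number of exceeding grains: `k = n - l(2p+1-l)/2`. -/
def kval (n l : ℕ) : ℤ := (n : ℤ) - (l : ℤ) * (2 * pfloor n l + 1 - l) / 2

/-- The heights of the leftmost and rightmost columns of the staircase fixed point:
`q = p - l + 1` if `k = 0` and `q = p - l + 2` if `k > 0`. -/
theorem staircase_left_right_heights (n l : ℕ) (hl : 1 ≤ l) :
    (kval n l = 0 → qceil n l = pfloor n l - l + 1) ∧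
      (0 < kval n l → qceil n l = pfloor n l - l + 2) := by
  have hlq : (0:ℚ) < l := by exact_mod_cast hl
  have hl0 : (l:ℚ) ≠ 0 := ne_of_gt hlq
  set p := pfloor n l with hp
  set x : ℚ := (n : ℚ) / l + (l : ℚ) / 2 - 1 / 2 with hx
  have hpx : p = ⌊x⌋ := rfl
  have hq : qceil n l = ⌈x⌉ - (l - 1) := by
    have h : (n : ℚ) / l - (l : ℚ) / 2 + 1 / 2 = x - (((l:ℤ) - 1 : ℤ) : ℚ) := by
      push_cast; ring
    rw [qceil, h, Int.ceil_sub_intCast]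
  obtain ⟨m, heq, hkm⟩ : ∃ m : ℤ, (l:ℤ)*(2*p+1-l) = 2*m ∧ kval n l = (n:ℤ) - m := by
    rcases Int.even_or_odd (l:ℤ) with ⟨c,hc⟩|⟨c,hc⟩
    · refine ⟨c*(2*p+1-l), by rw [hc]; ring, ?_⟩
      rw [kval, ← hp, show (l:ℤ)*(2*p+1-l) = 2*(c*(2*p+1-l)) from by rw [hc]; ring,
        Int.mul_ediv_cancel_left _ two_ne_zero]
    · refine ⟨(l:ℤ)*(p-c), by rw [hc]; ring, ?_⟩
      rw [kval, ← hp, show (l:ℤ)*(2*p+1-l) = 2*((l:ℤ)*(p-c)) from by rw [hc]; ring,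
        Int.mul_ediv_cancel_left _ two_ne_zero]
  have hbridge : x - p = (2*(n:ℚ) - (l:ℚ)*(2*(p:ℚ)+1-(l:ℚ))) / (2*l) := by
    rw [hx]; field_simp; ring
  constructor
  · intro hk
    have h2 : 2*(n:ℤ) - (l:ℤ)*(2*p+1-l) = 0 := by omega
    have h2q : 2*(n:ℚ) - (l:ℚ)*(2*(p:ℚ)+1-(l:ℚ)) = 0 := by exact_mod_cast h2
    have hx0 : x = (p:ℚ) := by
      have := hbridge
      rw [h2q, zero_div] at this
      linarith
    rw [hq, hx0, Int.ceil_intCast]; ring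
  · intro hk
    have h2 : 0 < 2*(n:ℤ) - (l:ℤ)*(2*p+1-l) := by omega
    have h2q : 0 < 2*(n:ℚ) - (l:ℚ)*(2*(p:ℚ)+1-(l:ℚ)) := by exact_mod_cast h2
    have hgt : (p:ℚ) < x := by
      have h3 := div_pos h2q (by positivity : (0:ℚ) < 2*l)
      rw [← hbridge] at h3
      linarith
    have hlt : x < (p:ℚ) + 1 := by
      have := Int.lt_floor_add_one x
      rw [← hpx] at this
      exact_mod_cast this
    have hceil : ⌈x⌉ = p + 1 := by
      rw [Int.ceil_eq_iff]
      constructor <;> push_cast <;> linarith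
    rw [hq, hceil]; ring
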